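/- If u : ℝ² → ℝ is C² in each variable with continuous mixed partials up to order (2,2) on [0,h₁]×[0,h₂], then for all (x,y) in this rectangle, u(x,y) = u(0,0) + x·u_x(0,0) + y·u_y(0,0) + x·y·u_{xy}(0,0) + ∫₀^x (x−α)·u_{xx}(α,0) dα + y·∫₀^x (x−α)·u_{xxy}(α,0) dα + ∫₀^y (y−β)·u_{yy}(0,β) dβ + x·∫₀^y (y−β)·u_{xyy}(0,β) dβ + ∫₀^x ∫₀^y (x−α)(y−β)·u_{xxyy}(α,β) dα dβ. -/

import Mathlib

open Set intervalIntegral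

/-- Partial derivative in the first variable. -/
noncomputable def Dx (u : ℝ → ℝ → ℝ) : ℝ → ℝ → ℝ := fun x y => deriv (fun t => u t y) x

/-- Partial derivative in the second variable. -/
noncomputable def Dy (u : ℝ → ℝ → ℝ) : ℝ → ℝ → ℝ := fun x y => deriv (fun t => u x t) y

open MeasureTheory

section aux

lemma taylor1' {f : ℝ → ℝ} {x : ℝ} (hf : Differentiable ℝ f)
    (hf' : Differentiable ℝ (deriv f))
    (hc : ContinuousOn (deriv (deriv f)) (uIcc 0 x)) :
    f x = f 0 + x * deriv f 0 + ∫ t in (0:ℝ)..x, (x - t) * deriv (deriv f) t := by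
  have key : ∀ t ∈ uIcc 0 x, HasDerivAt (fun s => f s + (x - s) * deriv f s)
      ((x - t) * deriv (deriv f) t) t := by
    intro t _
    have h1 := (hf t).hasDerivAt
    have h2 := (hf' t).hasDerivAt
    have h0 : HasDerivAt (fun s : ℝ => x - s) (-1) t := by
      simpa using (hasDerivAt_id t).const_sub x
    have h3 := h0.mul h2
    exact (h1.add h3).congr_deriv (by ring)
  have hint : IntervalIntegrable (fun t => (x - t) * deriv (deriv f) t) volume 0 x := by
    apply ContinuousOn.intervalIntegrable
    exact (Continuous.continuousOn (by continuity)).mul hc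
  have hres := intervalIntegral.integral_eq_sub_of_hasDerivAt key hint
  rw [hres]; ring

lemma sliceY' {h₁ h₂ : ℝ} {v : ℝ → ℝ → ℝ}
    (hv : ContinuousOn (fun p : ℝ × ℝ => v p.1 p.2) (Icc 0 h₁ ×ˢ Icc 0 h₂))
    {x : ℝ} (hx : x ∈ Icc 0 h₁) : ContinuousOn (fun t => v x t) (Icc 0 h₂) := by
  have : ContinuousOn ((fun p : ℝ × ℝ => v p.1 p.2) ∘ (fun t : ℝ => (x, t))) (Icc 0 h₂) :=
    hv.comp (Continuous.continuousOn (by continuity)) (fun t ht => ⟨hx, ht⟩)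
  exact this

lemma sliceX' {h₁ h₂ : ℝ} {v : ℝ → ℝ → ℝ}
    (hv : ContinuousOn (fun p : ℝ × ℝ => v p.1 p.2) (Icc 0 h₁ ×ˢ Icc 0 h₂))
    {t : ℝ} (ht : t ∈ Icc 0 h₂) : ContinuousOn (fun s => v s t) (Icc 0 h₁) := by
  have : ContinuousOn ((fun p : ℝ × ℝ => v p.1 p.2) ∘ (fun s : ℝ => (s, t))) (Icc 0 h₁) :=
    hv.comp (Continuous.continuousOn (by continuity)) (fun s hs => ⟨hs, ht⟩)
  exact this

lemma param_deriv' {h₁ h₂ : ℝ} {v : ℝ → ℝ → ℝ}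
    (hv : ContinuousOn (fun p : ℝ × ℝ => v p.1 p.2) (Icc 0 h₁ ×ˢ Icc 0 h₂))
    (hdv : ContinuousOn (fun p : ℝ × ℝ => Dx v p.1 p.2) (Icc 0 h₁ ×ˢ Icc 0 h₂))
    (hd : ∀ t, Differentiable ℝ (fun s => v s t))
    {x b y : ℝ} (hx : x ∈ Ioo 0 h₁) (hb : b ∈ Icc 0 h₂) (hy : y ∈ Icc 0 h₂) :
    HasDerivAt (fun s => ∫ t in b..y, v s t) (∫ t in b..y, Dx v x t) x := by
  obtain ⟨C, hC⟩ := (isCompact_Icc.prod isCompact_Icc).exists_bound_of_continuousOn hdv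
  have hIsub : uIoc b y ⊆ Icc 0 h₂ := by
    rw [uIoc_eq_union]
    rintro t (ht | ht)
    · exact ⟨le_trans hb.1 ht.1.le, le_trans ht.2 hy.2⟩
    · exact ⟨le_trans hy.1 ht.1.le, le_trans ht.2 hb.2⟩
  have husub : uIcc b y ⊆ Icc 0 h₂ := uIcc_subset_Icc hb hy
  have hxI : x ∈ Icc 0 h₁ := ⟨hx.1.le, hx.2.le⟩
  set ε := min x (h₁ - x) with hε
  have hεpos : 0 < ε := lt_min hx.1 (by linarith [hx.2])
  have hball : Metric.ball x ε ⊆ Icc 0 h₁ := by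
    intro s hs
    rw [Metric.mem_ball, Real.dist_eq, abs_lt] at hs
    constructor
    · nlinarith [min_le_left x (h₁ - x), hs.1]
    · nlinarith [min_le_right x (h₁ - x), hs.2]
  have key := intervalIntegral.hasDerivAt_integral_of_dominated_loc_of_deriv_le
    (F := fun s t => v s t) (F' := fun s t => Dx v s t) (x₀ := x)
    (a := b) (b := y) (μ := volume) (bound := fun _ => C) (Metric.ball_mem_nhds x hεpos)
    ?_ ?_ ?_ ?_ ?_ ?_
  · exact key.2
  · filter_upwards [Metric.ball_mem_nhds x hεpos] with s hs
    exact (((sliceY' hv (hball hs)).mono hIsub).aestronglyMeasurable measurableSet_uIoc)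
  · exact ((sliceY' hv hxI).mono husub).intervalIntegrable
  · exact ((sliceY' hdv hxI).mono hIsub).aestronglyMeasurable measurableSet_uIoc
  · filter_upwards with t
    intro ht s hs
    exact hC (s, t) ⟨hball hs, hIsub ht⟩
  · exact intervalIntegrable_const
  · filter_upwards with t
    intro ht s hs
    exact ((hd t) s).hasDerivAt

section swap
variable {h₁ h₂ : ℝ} {v : ℝ → ℝ → ℝ}
  (hA : ∀ y, Differentiable ℝ (fun s => v s y))
  (hB : ∀ x, Differentiable ℝ (fun t => v x t))
  (hC : ∀ t, Differentiable ℝ (fun s => Dy v s t))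
  (hD : ∀ y, Differentiable ℝ (fun s => Dx v s y))
  (hE : ∀ t, Differentiable ℝ (fun s => Dx (Dy v) s t))
  (hc1 : ContinuousOn (fun p : ℝ × ℝ => Dy v p.1 p.2) (Icc 0 h₁ ×ˢ Icc 0 h₂))
  (hc2 : ContinuousOn (fun p : ℝ × ℝ => Dx (Dy v) p.1 p.2) (Icc 0 h₁ ×ˢ Icc 0 h₂))
  (hc3 : ContinuousOn (fun p : ℝ × ℝ => Dx (Dx (Dy v)) p.1 p.2) (Icc 0 h₁ ×ˢ Icc 0 h₂))

include hB hC hA hc1 hc2 in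
lemma I1' : ∀ x ∈ Ioo 0 h₁, ∀ b ∈ Icc 0 h₂, ∀ y ∈ Icc 0 h₂,
    Dx v x y - Dx v x b = ∫ t in b..y, Dx (Dy v) x t := by
  intro x hx b hb y hy
  have H0 : ∀ s ∈ Ioo 0 h₁, (∫ t in b..y, Dy v s t) = v s y - v s b := by
    intro s hs
    apply intervalIntegral.integral_eq_sub_of_hasDerivAt
    · exact fun t _ => ((hB s) t).hasDerivAt
    · exact ((sliceY' hc1 ⟨hs.1.le, hs.2.le⟩).mono (uIcc_subset_Icc hb hy)).intervalIntegrable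
  have hΦ : HasDerivAt (fun s => ∫ t in b..y, Dy v s t) (∫ t in b..y, Dx (Dy v) x t) x :=
    param_deriv' hc1 hc2 hC hx hb hy
  have hev : (fun s => ∫ t in b..y, Dy v s t) =ᶠ[nhds x] (fun s => v s y - v s b) :=
    Filter.eventuallyEq_of_mem (Ioo_mem_nhds hx.1 hx.2) H0
  have hΦ' : HasDerivAt (fun s => v s y - v s b) (∫ t in b..y, Dx (Dy v) x t) x :=
    hΦ.congr_of_eventuallyEq hev.symm
  have hΨ : HasDerivAt (fun s => v s y - v s b) (Dx v x y - Dx v x b) x :=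
    ((hA y) x).hasDerivAt.sub ((hA b) x).hasDerivAt
  exact hΨ.unique hΦ'

include hA hB hC hD hE hc1 hc2 hc3 in
lemma I2' : ∀ x ∈ Ioo 0 h₁, ∀ b ∈ Icc 0 h₂, ∀ y ∈ Icc 0 h₂,
    Dx (Dx v) x y - Dx (Dx v) x b = ∫ t in b..y, Dx (Dx (Dy v)) x t := by
  intro x hx b hb y hy
  have hΦ : HasDerivAt (fun s => ∫ t in b..y, Dx (Dy v) s t)
      (∫ t in b..y, Dx (Dx (Dy v)) x t) x := param_deriv' hc2 hc3 hE hx hb hy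
  have hev : (fun s => ∫ t in b..y, Dx (Dy v) s t) =ᶠ[nhds x] (fun s => Dx v s y - Dx v s b) := by
    apply Filter.eventuallyEq_of_mem (Ioo_mem_nhds hx.1 hx.2)
    intro s hs
    exact (I1' hA hB hC hc1 hc2 s hs b hb y hy).symm
  have hΦ' : HasDerivAt (fun s => Dx v s y - Dx v s b) (∫ t in b..y, Dx (Dx (Dy v)) x t) x :=
    hΦ.congr_of_eventuallyEq hev.symm
  have hΨ : HasDerivAt (fun s => Dx v s y - Dx v s b) (Dx (Dx v) x y - Dx (Dx v) x b) x :=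
    ((hD y) x).hasDerivAt.sub ((hD b) x).hasDerivAt
  exact hΨ.unique hΦ'

include hA hB hC hD hE hc1 hc2 hc3 in
lemma Lswap' : ∀ x ∈ Ioo 0 h₁, ∀ b ∈ Ioo 0 h₂,
    Dy (Dx (Dx v)) x b = Dx (Dx (Dy v)) x b := by
  intro x hx b hb
  have hbI : b ∈ Icc 0 h₂ := ⟨hb.1.le, hb.2.le⟩
  have hxI : x ∈ Icc 0 h₁ := ⟨hx.1.le, hx.2.le⟩
  set f : ℝ → ℝ := fun t => Dx (Dx (Dy v)) x t with hf
  have hfc : ContinuousOn f (Icc 0 h₂) := sliceY' hc3 hxI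
  have hg : HasDerivAt (fun z => Dx (Dx v) x b + ∫ t in b..z, f t) (f b) b := by
    apply HasDerivAt.const_add
    apply intervalIntegral.integral_hasDerivAt_right
    · exact (hfc.mono (uIcc_subset_Icc hbI hbI)).intervalIntegrable
    · exact ⟨Icc 0 h₂, Icc_mem_nhds hb.1 hb.2, hfc.aestronglyMeasurable measurableSet_Icc⟩
    · exact hfc.continuousAt (Icc_mem_nhds hb.1 hb.2)
  have hev : (fun z => Dx (Dx v) x b + ∫ t in b..z, f t) =ᶠ[nhds b]
      (fun z => Dx (Dx v) x z) := by
    apply Filter.eventuallyEq_of_mem (Ioo_mem_nhds hb.1 hb.2)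
    intro z hz
    have := I2' hA hB hC hD hE hc1 hc2 hc3 x hx b hbI z ⟨hz.1.le, hz.2.le⟩
    simp only [hf]
    linarith [this]
  have : HasDerivAt (fun z => Dx (Dx v) x z) (f b) b := hg.congr_of_eventuallyEq hev.symm
  exact this.deriv
end swap

lemma fub' {x y : ℝ} (hx : 0 ≤ x) (hy : 0 ≤ y) {H : ℝ → ℝ → ℝ}
    (hH : ContinuousOn (fun p : ℝ × ℝ => H p.1 p.2) (Icc 0 x ×ˢ Icc 0 y)) :
    (∫ β in (0:ℝ)..y, ∫ α in (0:ℝ)..x, H α β) = ∫ α in (0:ℝ)..x, ∫ β in (0:ℝ)..y, H α β := by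
  simp only [intervalIntegral.integral_of_le hx, intervalIntegral.integral_of_le hy]
  have hH' : ContinuousOn (fun p : ℝ × ℝ => H p.2 p.1) (Icc 0 y ×ˢ Icc 0 x) := by
    have : ContinuousOn ((fun p : ℝ × ℝ => H p.1 p.2) ∘ Prod.swap) (Icc 0 y ×ˢ Icc 0 x) :=
      hH.comp continuous_swap.continuousOn (fun p hp => ⟨hp.2, hp.1⟩)
    exact this
  have hint : Integrable (Function.uncurry fun β α => H α β)
      ((volume.restrict (Ioc 0 y)).prod (volume.restrict (Ioc 0 x))) := by
    rw [Measure.prod_restrict]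
    have h1 : IntegrableOn (Function.uncurry fun β α => H α β) (Icc 0 y ×ˢ Icc 0 x)
        (volume.prod volume) := by
      rw [← Measure.volume_eq_prod]
      exact hH'.integrableOn_compact (isCompact_Icc.prod isCompact_Icc)
    exact h1.mono_set (prod_mono Ioc_subset_Icc_self Ioc_subset_Icc_self)
  exact MeasureTheory.integral_integral_swap (f := fun β α => H α β) hint

lemma taylorX' {h₁ h₂ : ℝ} {w : ℝ → ℝ → ℝ}
    (hd0 : ∀ y, Differentiable ℝ (fun t => w t y))
    (hd1 : ∀ y, Differentiable ℝ (fun t => Dx w t y))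
    (hc2 : ContinuousOn (fun p : ℝ × ℝ => Dx (Dx w) p.1 p.2) (Icc 0 h₁ ×ˢ Icc 0 h₂))
    {x β : ℝ} (hx : x ∈ Icc 0 h₁) (hβ : β ∈ Icc 0 h₂) :
    w x β = w 0 β + x * Dx w 0 β + ∫ α in (0:ℝ)..x, (x - α) * Dx (Dx w) α β := by
  have hsub : uIcc 0 x ⊆ Icc 0 h₁ := by
    rw [uIcc_of_le hx.1]; exact Icc_subset_Icc le_rfl hx.2
  exact taylor1' (f := fun t => w t β) (hd0 β) (hd1 β) ((sliceX' hc2 hβ).mono hsub)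

lemma taylorY' {h₁ h₂ : ℝ} {w : ℝ → ℝ → ℝ}
    (hd0 : ∀ x, Differentiable ℝ (fun t => w x t))
    (hd1 : ∀ x, Differentiable ℝ (fun t => Dy w x t))
    (hc2 : ContinuousOn (fun p : ℝ × ℝ => Dy (Dy w) p.1 p.2) (Icc 0 h₁ ×ˢ Icc 0 h₂))
    {x y : ℝ} (hx : x ∈ Icc 0 h₁) (hy : y ∈ Icc 0 h₂) :
    w x y = w x 0 + y * Dy w x 0 + ∫ β in (0:ℝ)..y, (y - β) * Dy (Dy w) x β := by
  have hsub : uIcc 0 y ⊆ Icc 0 h₂ := by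
    rw [uIcc_of_le hy.1]; exact Icc_subset_Icc le_rfl hy.2
  exact taylor1' (f := fun t => w x t) (hd0 x) (hd1 x) ((sliceY' hc2 hx).mono hsub)

end aux

/-- integral representation (9) of smooth functions on the rectangle. -/
theorem integral_representation
    (h₁ h₂ : ℝ) (hh₁ : 0 < h₁) (hh₂ : 0 < h₂) (u : ℝ → ℝ → ℝ)
    (hcont : ∀ i j : ℕ, i ≤ 2 → j ≤ 2 →
      ContinuousOn (fun p : ℝ × ℝ => Dx^[i] (Dy^[j] u) p.1 p.2) (Icc 0 h₁ ×ˢ Icc 0 h₂))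
    (hdx : ∀ i j : ℕ, i ≤ 1 → j ≤ 2 → ∀ y, Differentiable ℝ (fun t => Dx^[i] (Dy^[j] u) t y))
    (hdy : ∀ i j : ℕ, i ≤ 2 → j ≤ 1 → ∀ x, Differentiable ℝ (fun t => Dx^[i] (Dy^[j] u) x t)) :
    ∀ x ∈ Icc 0 h₁, ∀ y ∈ Icc 0 h₂,
      u x y = u 0 0 + x * Dx u 0 0 + y * Dy u 0 0 + x * y * Dx (Dy u) 0 0
        + (∫ α in (0:ℝ)..x, (x - α) * Dx^[2] u α 0)
        + y * (∫ α in (0:ℝ)..x, (x - α) * Dx^[2] (Dy u) α 0)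
        + (∫ β in (0:ℝ)..y, (y - β) * Dy^[2] u 0 β)
        + x * (∫ β in (0:ℝ)..y, (y - β) * Dx (Dy^[2] u) 0 β)
        + ∫ α in (0:ℝ)..x, ∫ β in (0:ℝ)..y, (x - α) * (y - β) * Dy^[2] (Dx^[2] u) α β := by
  intro x hx y hy
  -- continuity facts, in composition form (definitional unfoldings of iterates)
  have c01 : ContinuousOn (fun p : ℝ × ℝ => Dy u p.1 p.2) (Icc 0 h₁ ×ˢ Icc 0 h₂) :=
    hcont 0 1 (by norm_num) (by norm_num)
  have c11 : ContinuousOn (fun p : ℝ × ℝ => Dx (Dy u) p.1 p.2) (Icc 0 h₁ ×ˢ Icc 0 h₂) :=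
    hcont 1 1 (by norm_num) (by norm_num)
  have c20 : ContinuousOn (fun p : ℝ × ℝ => Dx (Dx u) p.1 p.2) (Icc 0 h₁ ×ˢ Icc 0 h₂) :=
    hcont 2 0 (by norm_num) (by norm_num)
  have c21 : ContinuousOn (fun p : ℝ × ℝ => Dx (Dx (Dy u)) p.1 p.2) (Icc 0 h₁ ×ˢ Icc 0 h₂) :=
    hcont 2 1 (by norm_num) (by norm_num)
  have c02 : ContinuousOn (fun p : ℝ × ℝ => Dy (Dy u) p.1 p.2) (Icc 0 h₁ ×ˢ Icc 0 h₂) :=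
    hcont 0 2 (by norm_num) (by norm_num)
  have c12 : ContinuousOn (fun p : ℝ × ℝ => Dx (Dy (Dy u)) p.1 p.2) (Icc 0 h₁ ×ˢ Icc 0 h₂) :=
    hcont 1 2 (by norm_num) (by norm_num)
  have c22 : ContinuousOn (fun p : ℝ × ℝ => Dx (Dx (Dy (Dy u))) p.1 p.2)
      (Icc 0 h₁ ×ˢ Icc 0 h₂) := hcont 2 2 (by norm_num) (by norm_num)
  -- differentiability facts
  have dx00 : ∀ y, Differentiable ℝ (fun t => u t y) := hdx 0 0 (by norm_num) (by norm_num)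
  have dx01 : ∀ y, Differentiable ℝ (fun t => Dy u t y) := hdx 0 1 (by norm_num) (by norm_num)
  have dx02 : ∀ y, Differentiable ℝ (fun t => Dy (Dy u) t y) :=
    hdx 0 2 (by norm_num) (by norm_num)
  have dx10 : ∀ y, Differentiable ℝ (fun t => Dx u t y) := hdx 1 0 (by norm_num) (by norm_num)
  have dx11 : ∀ y, Differentiable ℝ (fun t => Dx (Dy u) t y) :=
    hdx 1 1 (by norm_num) (by norm_num)
  have dx12 : ∀ y, Differentiable ℝ (fun t => Dx (Dy (Dy u)) t y) :=
    hdx 1 2 (by norm_num) (by norm_num)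
  have dy00 : ∀ x, Differentiable ℝ (fun t => u x t) := hdy 0 0 (by norm_num) (by norm_num)
  have dy01 : ∀ x, Differentiable ℝ (fun t => Dy u x t) := hdy 0 1 (by norm_num) (by norm_num)
  have h0x : (0:ℝ) ∈ Icc 0 h₁ := ⟨le_rfl, hh₁.le⟩
  have h0y : (0:ℝ) ∈ Icc 0 h₂ := ⟨le_rfl, hh₂.le⟩
  have huy : uIcc 0 y ⊆ Icc 0 h₂ := by
    rw [uIcc_of_le hy.1]; exact Icc_subset_Icc le_rfl hy.2
  -- Taylor expansions
  have E0 : u x y = u x 0 + y * Dy u x 0 + ∫ β in (0:ℝ)..y, (y - β) * Dy^[2] u x β :=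
    taylorY' dy00 dy01 c02 hx hy
  have E1 : u x 0 = u 0 0 + x * Dx u 0 0 + ∫ α in (0:ℝ)..x, (x - α) * Dx^[2] u α 0 :=
    taylorX' dx00 dx10 c20 hx h0y
  have E2 : Dy u x 0 = Dy u 0 0 + x * Dx (Dy u) 0 0
      + ∫ α in (0:ℝ)..x, (x - α) * Dx^[2] (Dy u) α 0 :=
    taylorX' dx01 dx11 c21 hx h0y
  have E3 : ∀ β ∈ Icc 0 h₂, Dy^[2] u x β = Dy^[2] u 0 β + x * Dx (Dy^[2] u) 0 β
      + ∫ α in (0:ℝ)..x, (x - α) * Dx (Dx (Dy^[2] u)) α β :=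
    fun β hβ => taylorX' dx02 dx12 c22 hx hβ
  -- interior commutation of derivatives
  have hsw : ∀ α ∈ Ioo 0 h₁, ∀ β ∈ Ioo 0 h₂,
      Dy^[2] (Dx^[2] u) α β = Dx (Dx (Dy^[2] u)) α β := by
    intro α hα β hβ
    have L1 := Lswap' (v := u) dx00 dy00 dx01 dx10 dx11 c01 c11 c21
    have L2 := Lswap' (v := Dy u) dx01 dy01 dx02 dx11 dx12 c02 c12 c22
    have step1 : Dy (Dy (Dx (Dx u))) α β = Dy (Dx (Dx (Dy u))) α β := by
      apply Filter.EventuallyEq.deriv_eq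
      apply Filter.eventuallyEq_of_mem (Ioo_mem_nhds hβ.1 hβ.2)
      intro t ht
      exact L1 α hα t ht
    calc Dy^[2] (Dx^[2] u) α β = Dy (Dx (Dx (Dy u))) α β := step1
      _ = Dx (Dx (Dy (Dy u))) α β := L2 α hα β hβ
  -- splitting of the y-integral
  set A : ℝ → ℝ := fun β => (y - β) * Dy^[2] u 0 β with hAdef
  set B : ℝ → ℝ := fun β => x * ((y - β) * Dx (Dy^[2] u) 0 β) with hBdef
  set Cc : ℝ → ℝ := fun β => (y - β) * ∫ α in (0:ℝ)..x, (x - α) * Dx (Dx (Dy^[2] u)) α β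
    with hCdef
  have hycont : ContinuousOn (fun β : ℝ => y - β) (uIcc 0 y) :=
    ((continuous_const.sub continuous_id).continuousOn)
  have hAint : IntervalIntegrable A volume 0 y :=
    (hycont.mul ((sliceY' c02 h0x).mono huy)).intervalIntegrable
  have hBint : IntervalIntegrable B volume 0 y := by
    apply ContinuousOn.intervalIntegrable
    exact continuousOn_const.mul (hycont.mul ((sliceY' c12 h0x).mono huy))
  have hTint : IntervalIntegrable (fun β => (y - β) * Dy^[2] u x β) volume 0 y :=
    (hycont.mul ((sliceY' c02 hx).mono huy)).intervalIntegrable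
  have hTeq : EqOn (fun β => (y - β) * Dy^[2] u x β) (fun β => A β + B β + Cc β) (uIcc 0 y) := by
    intro β hβ
    simp only [hAdef, hBdef, hCdef]
    rw [E3 β (huy hβ)]
    ring
  have hABCint : IntervalIntegrable (fun β => A β + B β + Cc β) volume 0 y := by
    apply hTint.congr
    exact fun t ht => hTeq (uIoc_subset_uIcc ht)
  have hCint : IntervalIntegrable Cc volume 0 y := by
    have h1 : IntervalIntegrable (fun β => (A β + B β + Cc β) - A β - B β) volume 0 y :=
      (hABCint.sub hAint).sub hBint
    have h2 : (fun β => (A β + B β + Cc β) - A β - B β) = Cc := by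
      funext β; ring
    rwa [h2] at h1
  have E4 : (∫ β in (0:ℝ)..y, (y - β) * Dy^[2] u x β)
      = (∫ β in (0:ℝ)..y, A β) + (∫ β in (0:ℝ)..y, B β) + (∫ β in (0:ℝ)..y, Cc β) := by
    rw [intervalIntegral.integral_congr hTeq]
    rw [intervalIntegral.integral_add (hAint.add hBint) hCint,
      intervalIntegral.integral_add hAint hBint]
  have EB : (∫ β in (0:ℝ)..y, B β) = x * ∫ β in (0:ℝ)..y, (y - β) * Dx (Dy^[2] u) 0 β :=
    intervalIntegral.integral_const_mul x _
  -- Fubini + commutation on the double integral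
  have hGcont : ContinuousOn
      (fun p : ℝ × ℝ => (x - p.1) * (y - p.2) * Dx (Dx (Dy (Dy u))) p.1 p.2)
      (Icc 0 x ×ˢ Icc 0 y) := by
    have hsubset : (Icc 0 x ×ˢ Icc 0 y : Set (ℝ × ℝ)) ⊆ Icc 0 h₁ ×ˢ Icc 0 h₂ :=
      prod_mono (Icc_subset_Icc le_rfl hx.2) (Icc_subset_Icc le_rfl hy.2)
    exact (((continuous_const.sub continuous_fst).mul
      (continuous_const.sub continuous_snd)).continuousOn).mul (c22.mono hsubset)
  have EC1 : (∫ β in (0:ℝ)..y, Cc β)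
      = ∫ β in (0:ℝ)..y, ∫ α in (0:ℝ)..x, (x - α) * (y - β) * Dx (Dx (Dy^[2] u)) α β := by
    apply intervalIntegral.integral_congr
    intro β hβ
    simp only [hCdef]
    rw [← intervalIntegral.integral_const_mul]
    apply intervalIntegral.integral_congr
    intro α hα
    ring
  have EC2 : (∫ β in (0:ℝ)..y, ∫ α in (0:ℝ)..x, (x - α) * (y - β) * Dx (Dx (Dy^[2] u)) α β)
      = ∫ α in (0:ℝ)..x, ∫ β in (0:ℝ)..y, (x - α) * (y - β) * Dx (Dx (Dy^[2] u)) α β :=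
    fub' hx.1 hy.1 hGcont
  have ED : (∫ α in (0:ℝ)..x, ∫ β in (0:ℝ)..y, (x - α) * (y - β) * Dx (Dx (Dy^[2] u)) α β)
      = ∫ α in (0:ℝ)..x, ∫ β in (0:ℝ)..y, (x - α) * (y - β) * Dy^[2] (Dx^[2] u) α β := by
    apply intervalIntegral.integral_congr_ae
    have hax : ∀ᵐ (α : ℝ), α ≠ x := by
      filter_upwards [MeasureTheory.compl_mem_ae_iff.2 (measure_singleton x)] with α hα
      simpa using hα
    filter_upwards [hax] with α hαx hαI
    rw [uIoc_of_le hx.1] at hαI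
    have hαmem : α ∈ Ioo 0 h₁ := ⟨hαI.1, lt_of_lt_of_le (lt_of_le_of_ne hαI.2 hαx) hx.2⟩
    apply intervalIntegral.integral_congr_ae
    have hay : ∀ᵐ (β : ℝ), β ≠ y := by
      filter_upwards [MeasureTheory.compl_mem_ae_iff.2 (measure_singleton y)] with β hβ
      simpa using hβ
    filter_upwards [hay] with β hβy hβI
    rw [uIoc_of_le hy.1] at hβI
    have hβmem : β ∈ Ioo 0 h₂ := ⟨hβI.1, lt_of_lt_of_le (lt_of_le_of_ne hβI.2 hβy) hy.2⟩
    rw [hsw α hαmem β hβmem]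
  rw [E0, E1, E2, E4, EB, EC1, EC2, ED]
  simp only [hAdef]
  ring
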